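/- Let ℓ be a prime and q a prime with q ≡ 1 (mod ℓ). For e ≥ 1 set ε_q = min(e, v_ℓ(q−1)). There exists an algebraic integer g ∈ ℚ(ζ_{ℓ^e q}) with g^{ℓ^e} ∈ ℚ(ζ_{ℓ^e}) such that the degree [ℚ(ζ_{ℓ^e}, g) : ℚ(ζ_{ℓ^e})] has ℓ-adic valuation exactly ε_q. -/

import Mathlib

open IntermediateField Polynomial Module in
private lemma aux_kummer (E L : Type*) [Field E] [Field L] [Algebra E L]
    [FiniteDimensional E L] [IsGalois E L] [IsCyclic (L ≃ₐ[E] L)]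
    (d c : ℕ) (hd : 0 < d) (hfin : finrank E L = c) (hdc : d ∣ c)
    (hprim : (primitiveRoots d E).Nonempty) :
    ∃ α : L, α ^ d ∈ Set.range (algebraMap E L) ∧ (minpoly E α).natDegree = d := by
  classical
  have hc : 0 < c := hfin ▸ finrank_pos
  obtain ⟨σ, hσ⟩ := IsCyclic.exists_generator (α := L ≃ₐ[E] L)
  have horder : orderOf σ = c := by
    rw [orderOf_eq_card_of_forall_mem_zpowers hσ,
      IsGalois.card_aut_eq_finrank, hfin]
  set H : Subgroup (L ≃ₐ[E] L) := Subgroup.zpowers (σ ^ d) with hH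
  have hcardH : Nat.card H = c / d := by
    rw [hH, Nat.card_zpowers, orderOf_pow, horder, Nat.gcd_eq_right hdc]
  set K : IntermediateField E L := IntermediateField.fixedField H with hK
  have hKL : finrank ↥K L = c / d := by
    rw [hK, IntermediateField.finrank_fixedField_eq_card, hcardH]
  have hEK : finrank E ↥K = d := by
    have htower : finrank E ↥K * finrank ↥K L = c := by
      rw [Module.finrank_mul_finrank, hfin]
    rw [hKL] at htower
    have hcd : 0 < c / d := Nat.div_pos (Nat.le_of_dvd hc hdc) hd
    have : d * (c / d) = c := Nat.mul_div_cancel' hdc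
    exact Nat.eq_of_mul_eq_mul_right hcd (htower.trans this.symm)
  have hcomm : ∀ a b : L ≃ₐ[E] L, a * b = b * a := by
    intro a b
    obtain ⟨i, hi⟩ := hσ a
    obtain ⟨j, hj⟩ := hσ b
    rw [← hi, ← hj, ← zpow_add, ← zpow_add, add_comm]
  haveI hHn : H.Normal :=
    ⟨fun x hx g => by rw [hcomm g x, mul_assoc, mul_inv_cancel, mul_one]; exact hx⟩
  haveI : IsGalois E ↥K := IsGalois.of_fixedField_normal_subgroup H
  haveI : IsCyclic (↥K ≃ₐ[E] ↥K) := by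
    have : IsCyclic ((L ≃ₐ[E] L) ⧸ H) := isCyclic_of_surjective _ (QuotientGroup.mk'_surjective H)
    exact isCyclic_of_surjective ((IsGalois.normalAutEquivQuotient H).toMonoidHom)
      (fun x => ⟨(IsGalois.normalAutEquivQuotient H).symm x,
        (IsGalois.normalAutEquivQuotient H).apply_symm_apply x⟩)
  have hprim' : (primitiveRoots (finrank E ↥K) E).Nonempty := hEK ▸ hprim
  obtain ⟨α, hα1, hα2⟩ := exists_root_adjoin_eq_top_of_isCyclic E ↥K hprim'
  obtain ⟨a, ha⟩ := hα1
  refine ⟨K.val α, ⟨a, ?_⟩, ?_⟩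
  · rw [← hEK, ← map_pow, ← ha]
    exact IsScalarTower.algebraMap_apply E ↥K L a
  · rw [minpoly.algHom_eq K.val (K.val.injective) α, ← IntermediateField.adjoin.finrank
      (IsIntegral.of_finite E α), hα2, IntermediateField.finrank_top', hEK]

set_option maxHeartbeats 2000000 in
set_option synthInstance.maxHeartbeats 400000 in
open Complex IntermediateField in
theorem stmt_16 (ℓ q : ℕ) (hℓ : ℓ.Prime) (hq : q.Prime) (hmod : q % ℓ = 1)
    (e : ℕ) (he : 1 ≤ e) :
    ∃ g : ℂ, IsIntegral ℤ g ∧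
      g ∈ ℚ⟮Complex.exp (2 * Real.pi * I / ((ℓ ^ e * q : ℕ)))⟯ ∧
      g ^ (ℓ ^ e) ∈ ℚ⟮Complex.exp (2 * Real.pi * I / ((ℓ ^ e : ℕ)))⟯ ∧
      ∀ E F : IntermediateField ℚ ℂ,
        E = ℚ⟮Complex.exp (2 * Real.pi * I / ((ℓ ^ e : ℕ)))⟯ →
        F = ℚ⟮Complex.exp (2 * Real.pi * I / ((ℓ ^ e : ℕ))), g⟯ →
        padicValNat ℓ (Module.finrank ℚ F / Module.finrank ℚ E) =
          min e (padicValNat ℓ (q - 1)) := by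
  classical
  haveI : Fact ℓ.Prime := ⟨hℓ⟩
  haveI : Fact q.Prime := ⟨hq⟩
  have hne : ℓ ≠ q := by rintro rfl; simp [Nat.mod_self] at hmod
  set n := ℓ ^ e with hn
  have hnpos : 0 < n := pow_pos hℓ.pos e
  have hN : 0 < n * q := Nat.mul_pos hnpos hq.pos
  have hcop : n.Coprime q := Nat.Coprime.pow_left e ((Nat.coprime_primes hℓ hq).mpr hne)
  set m := padicValNat ℓ (q - 1) with hm
  set ε := min e m with hε
  have hεe : ε ≤ e := min_le_left _ _
  have hdpos : 0 < ℓ ^ ε := pow_pos hℓ.pos ε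
  have hdvd : ℓ ^ ε ∣ q - 1 :=
    dvd_trans (pow_dvd_pow ℓ (min_le_right e m)) pow_padicValNat_dvd
  set ζ := Complex.exp (2 * Real.pi * I / ((n * q : ℕ))) with hζdef
  set ξ := Complex.exp (2 * Real.pi * I / ((n : ℕ))) with hξdef
  have hζ : IsPrimitiveRoot ζ (n * q) := Complex.isPrimitiveRoot_exp _ hN.ne'
  have hξ : IsPrimitiveRoot ξ n := Complex.isPrimitiveRoot_exp _ hnpos.ne'
  set ζq := Complex.exp (2 * Real.pi * I / ((q : ℕ))) with hζqdef
  have hζq : IsPrimitiveRoot ζq q := Complex.isPrimitiveRoot_exp _ hq.pos.ne'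
  have h1c : ((n : ℂ)) ≠ 0 := by exact_mod_cast hnpos.ne'
  have h2c : ((q : ℂ)) ≠ 0 := by exact_mod_cast hq.pos.ne'
  have hzq : ζ ^ q = ξ := by
    rw [hζdef, hξdef, ← Complex.exp_nat_mul]
    congr 1
    push_cast
    field_simp
  have hzn : ζ ^ n = ζq := by
    rw [hζdef, hζqdef, ← Complex.exp_nat_mul]
    congr 1
    push_cast
    field_simp
  -- integrality of the roots
  have hintζ : IsIntegral ℚ ζ := (hζ.isIntegral hN).tower_top
  have hintξ : IsIntegral ℚ ξ := (hξ.isIntegral hnpos).tower_top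
  have hintζqE : IsIntegral ↥(ℚ⟮ξ⟯) ζq := (hζq.isIntegral hq.pos).tower_top
  haveI : FiniteDimensional ℚ ↥(ℚ⟮ξ⟯) := IntermediateField.adjoin.finiteDimensional hintξ
  haveI : FiniteDimensional ℚ ↥(ℚ⟮ζ⟯) := IntermediateField.adjoin.finiteDimensional hintζ
  -- the big cyclotomic field L over E
  set L : IntermediateField ↥(ℚ⟮ξ⟯) ℂ := IntermediateField.adjoin ↥(ℚ⟮ξ⟯) {ζq} with hLdef
  have hrs : L.restrictScalars ℚ = ℚ⟮ζ⟯ := by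
    rw [hLdef]; erw [IntermediateField.adjoin_adjoin_left]
    apply le_antisymm
    · rw [adjoin_le_iff]
      rintro x (rfl | rfl)
      · exact hzq ▸ pow_mem (mem_adjoin_simple_self ℚ ζ) q
      · exact hzn ▸ pow_mem (mem_adjoin_simple_self ℚ ζ) n
    · rw [adjoin_simple_le_iff]
      have hζne : ζ ≠ 0 := hζ.ne_zero hN.ne'
      obtain ⟨a, b, hab⟩ : IsCoprime (n : ℤ) (q : ℤ) := by
        rw [Int.isCoprime_iff_gcd_eq_one]; exact_mod_cast hcop
      have hz : ζ = ζq ^ a * ξ ^ b := by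
        rw [← hzq, ← hzn, ← zpow_natCast ζ n, ← zpow_natCast ζ q, ← zpow_mul, ← zpow_mul,
          ← zpow_add₀ hζne]
        rw [mul_comm (n : ℤ) a, mul_comm (q : ℤ) b, hab, zpow_one]
      rw [hz]
      exact mul_mem (zpow_mem (subset_adjoin _ _ (by simp)) a)
        (zpow_mem (subset_adjoin _ _ (by simp)) b)
  -- degrees
  have hdegL0 : Module.finrank ℚ ↥(ℚ⟮ζ⟯) = (n * q).totient := by
    rw [IntermediateField.adjoin.finrank hintζ, ← Polynomial.cyclotomic_eq_minpoly_rat hζ hN,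
      Polynomial.natDegree_cyclotomic]
  have hdegE : Module.finrank ℚ ↥(ℚ⟮ξ⟯) = n.totient := by
    rw [IntermediateField.adjoin.finrank hintξ, ← Polynomial.cyclotomic_eq_minpoly_rat hξ hnpos,
      Polynomial.natDegree_cyclotomic]
  haveI : FiniteDimensional ↥(ℚ⟮ξ⟯) ↥L := IntermediateField.adjoin.finiteDimensional hintζqE
  have hdegL : Module.finrank ℚ ↥L = (n * q).totient := by
    rw [show Module.finrank ℚ ↥L = Module.finrank ℚ ↥(L.restrictScalars ℚ) from rfl, hrs, hdegL0]
  have hfinEL : Module.finrank ↥(ℚ⟮ξ⟯) ↥L = q - 1 := by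
    have htower : Module.finrank ℚ ↥(ℚ⟮ξ⟯) * Module.finrank ↥(ℚ⟮ξ⟯) ↥L = (n * q).totient := by
      rw [Module.finrank_mul_finrank, hdegL]
    rw [hdegE, Nat.totient_mul hcop, Nat.totient_prime hq] at htower
    exact Nat.eq_of_mul_eq_mul_left (Nat.totient_pos.mpr hnpos) htower
  -- Galois and cyclic
  set q' : ℕ+ := ⟨q, hq.pos⟩ with hq'
  have hζq' : IsPrimitiveRoot ζq ((q' : ℕ+) : ℕ) := hζq
  haveI hcyc0 := hζq'.adjoin_isCyclotomicExtension ↥(ℚ⟮ξ⟯)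
  have hsub : L.toSubalgebra = Algebra.adjoin ↥(ℚ⟮ξ⟯) {ζq} :=
    IntermediateField.adjoin_simple_toSubalgebra_of_isAlgebraic hintζqE.isAlgebraic
  haveI hcyc : IsCyclotomicExtension {(q' : ℕ)} ↥(ℚ⟮ξ⟯) ↥L :=
    IsCyclotomicExtension.equiv {(q' : ℕ)} ↥(ℚ⟮ξ⟯) _ (Subalgebra.equivOfEq _ _ hsub.symm)
  haveI : IsGalois ↥(ℚ⟮ξ⟯) ↥L := IsCyclotomicExtension.isGalois {(q' : ℕ)} ↥(ℚ⟮ξ⟯) ↥L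
  have hmemζq : ζq ∈ L := subset_adjoin _ _ (by simp)
  have hζqL : IsPrimitiveRoot (⟨ζq, hmemζq⟩ : ↥L) ((q' : ℕ+) : ℕ) :=
    (IsPrimitiveRoot.coe_submonoidClass_iff).mp hζq
  haveI : IsCyclic (↥L ≃ₐ[↥(ℚ⟮ξ⟯)] ↥L) :=
    isCyclic_of_subgroup_isDomain
      ((Units.coeHom (ZMod q)).comp (hζqL.autToPow ↥(ℚ⟮ξ⟯)))
      ((Units.val_injective).comp (hζqL.autToPow_injective ↥(ℚ⟮ξ⟯)))
  -- primitive ℓ^ε-th root of unity inside E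
  have hprim : (primitiveRoots (ℓ ^ ε) ↥(ℚ⟮ξ⟯)).Nonempty := by
    refine ⟨⟨ξ ^ (ℓ ^ (e - ε)), pow_mem (mem_adjoin_simple_self ℚ ξ) _⟩, ?_⟩
    rw [mem_primitiveRoots hdpos]
    have hp : IsPrimitiveRoot (ξ ^ ℓ ^ (e - ε)) (ℓ ^ ε) := by
      refine hξ.pow hnpos ?_
      rw [hn, ← pow_add]
      congr 1
      omega
    exact (IsPrimitiveRoot.coe_submonoidClass_iff).mp hp
  -- Kummer generator
  obtain ⟨α, ⟨a, ha⟩, hdeg⟩ := aux_kummer ↥(ℚ⟮ξ⟯) ↥L (ℓ ^ ε) (q - 1) hdpos hfinEL hdvd hprim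
  set g₀ : ℂ := L.val α with hg₀def
  have hg₀mem : g₀ ∈ ℚ⟮ζ⟯ := hrs ▸ (show (α : ℂ) ∈ L.restrictScalars ℚ from α.2)
  have hpow : g₀ ^ (ℓ ^ ε) = algebraMap ↥(ℚ⟮ξ⟯) ℂ a := by
    rw [hg₀def, ← map_pow, ← ha]
    exact L.val.commutes a
  have hpowE : g₀ ^ (ℓ ^ ε) ∈ ℚ⟮ξ⟯ := by rw [hpow]; exact a.2
  have hintg₀E : IsIntegral ↥(ℚ⟮ξ⟯) g₀ := (IsIntegral.of_finite _ α).map L.val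
  have halgZ : IsAlgebraic ℤ g₀ := by
    rw [IsFractionRing.isAlgebraic_iff ℤ ℚ ℂ]
    exact ((IsIntegral.of_finite ℚ (⟨g₀, hg₀mem⟩ : ↥(ℚ⟮ζ⟯))).map
      (IntermediateField.val _)).isAlgebraic
  obtain ⟨x, y, hy, hxy⟩ : ∃ x : integralClosure ℤ ℂ, ∃ y ≠ (0 : ℤ), algebraMap ℤ ℂ y * g₀ = x := by
    obtain ⟨y, hy, hint⟩ := halgZ.exists_integral_multiple
    exact ⟨⟨_, hint⟩, y, hy, (Algebra.smul_def y g₀).symm⟩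
  have hymem : ∀ (M : IntermediateField ℚ ℂ), algebraMap ℤ ℂ y ∈ M := by
    intro M
    simpa using IntermediateField.intCast_mem M y
  have hyne : (algebraMap ℤ ℂ y) ≠ 0 := by
    simpa using hy
  refine ⟨algebraMap ℤ ℂ y * g₀, ?_, ?_, ?_, ?_⟩
  · rw [hxy]; exact x.2
  · exact mul_mem (hymem _) hg₀mem
  · have h1 : (algebraMap ℤ ℂ y * g₀) ^ (ℓ ^ ε) ∈ ℚ⟮ξ⟯ := by
      rw [mul_pow]
      exact mul_mem (pow_mem (hymem _) _) hpowE
    have h2 : n = ℓ ^ ε * ℓ ^ (e - ε) := by rw [hn, ← pow_add]; congr 1; omega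
    rw [h2, pow_mul]
    exact pow_mem h1 _
  · rintro E F rfl rfl
    set g : ℂ := algebraMap ℤ ℂ y * g₀ with hgdef
    have hgg₀ : IntermediateField.adjoin ↥(ℚ⟮ξ⟯) {g} = IntermediateField.adjoin ↥(ℚ⟮ξ⟯) {g₀} := by
      apply le_antisymm
      · rw [adjoin_simple_le_iff, hgdef]
        exact mul_mem ((IntermediateField.adjoin ↥(ℚ⟮ξ⟯) {g₀}).algebraMap_mem
          ⟨algebraMap ℤ ℂ y, hymem _⟩) (mem_adjoin_simple_self _ g₀)
      · rw [adjoin_simple_le_iff]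
        have : g₀ = (algebraMap ℤ ℂ y)⁻¹ * g := by
          rw [hgdef, ← mul_assoc, inv_mul_cancel₀ hyne, one_mul]
        rw [this]
        exact mul_mem (inv_mem ((IntermediateField.adjoin ↥(ℚ⟮ξ⟯) {g}).algebraMap_mem
          ⟨algebraMap ℤ ℂ y, hymem _⟩)) (mem_adjoin_simple_self _ g)
    haveI : FiniteDimensional ↥(ℚ⟮ξ⟯) ↥(IntermediateField.adjoin ↥(ℚ⟮ξ⟯) {g₀}) :=
      IntermediateField.adjoin.finiteDimensional hintg₀E
    have hdegg₀ : Module.finrank ↥(ℚ⟮ξ⟯) ↥(IntermediateField.adjoin ↥(ℚ⟮ξ⟯) {g₀}) = ℓ ^ ε := by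
      rw [IntermediateField.adjoin.finrank hintg₀E,
        minpoly.algHom_eq L.val (L.val.injective) α, hdeg]
    have hF : Module.finrank ℚ ↥(ℚ⟮ξ, g⟯) = n.totient * ℓ ^ ε := by
      rw [← IntermediateField.adjoin_simple_adjoin_simple (F := ℚ) ξ g]
      change Module.finrank ℚ ↥(IntermediateField.adjoin ↥(ℚ⟮ξ⟯) {g}) = _
      rw [← Module.finrank_mul_finrank ℚ ↥(ℚ⟮ξ⟯) ↥(IntermediateField.adjoin ↥(ℚ⟮ξ⟯) {g}),
        hdegE, hgg₀, hdegg₀]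
    rw [hF, hdegE, Nat.mul_div_cancel_left _ (Nat.totient_pos.mpr hnpos),
      padicValNat.prime_pow ε]
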